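/- arXiv:0810.5565 — 2 statements merged into one kernel-verified Lean document; each statement's English description precedes it below -/
import Mathlib

section
/- Let H ⊆ ℝ^{[0,1]} be uniformly bounded and satisfy lim_n sup_{h₁,h₂∈H} |λ_n((h₁−h₂)²) − λ((h₁−h₂)²)| = 0, let G be a class of functions on U with envelope G₀ ∈ L²(ν) normalized so ν(G₀²) = 1, and let d(h₁g₁, h₂g₂) = ‖h₁−h₂‖_{L²(λ)} + ‖g₁−g₂‖_{L²(ν)} on F = {hg : h∈H, g∈G}. Define d_{λ_n⊗ν}(f₁,f₂) = ‖f₁−f₂‖_{L²(λ_n⊗ν)}. Then lim_{α↓0} limsup_{n→∞} sup{d_{λ_n⊗ν}(f₁,f₂) : f₁,f₂ ∈ F, d(f₁,f₂) ≤ α} = 0. -/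
open scoped BigOperators
open MeasureTheory

/-- `λ_n(f) = (1/n) ∑_{i=1}^n f(i/n)`, the discrete uniform measure on `[0,1]`. -/
noncomputable def lamn (n : ℕ) (f : ℝ → ℝ) : ℝ :=
  (1 / (n:ℝ)) * ∑ i ∈ Finset.Icc 1 n, f ((i:ℝ) / n)

/-- `λ(f) = ∫₀¹ f`, integration against Lebesgue measure on `[0,1]`. -/
noncomputable def lam (f : ℝ → ℝ) : ℝ := ∫ x in (0:ℝ)..1, f x

/-- The `L²(λ_n ⊗ ν)` pseudo-distance between the products `h₁g₁` and `h₂g₂`. -/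
noncomputable def dProd {U : Type*} [MeasurableSpace U] (ν : Measure U) (n : ℕ)
    (h₁ g₁h : ℝ → ℝ) (g₁ g₂ : U → ℝ) : ℝ :=
  Real.sqrt ((1 / (n:ℝ)) * ∑ i ∈ Finset.Icc 1 n,
    ∫ x, (h₁ ((i:ℝ) / n) * g₁ x - g₁h ((i:ℝ) / n) * g₂ x) ^ 2 ∂ν)

private lemma sqrt_add_le_aux (x y : ℝ) (hx : 0 ≤ x) (hy : 0 ≤ y) :
    Real.sqrt (x + y) ≤ Real.sqrt x + Real.sqrt y := by
  rw [show (Real.sqrt (x + y) ≤ Real.sqrt x + Real.sqrt y) ↔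
      (x + y ≤ (Real.sqrt x + Real.sqrt y) ^ 2) from
    Real.sqrt_le_left (by positivity)]
  nlinarith [Real.sq_sqrt hx, Real.sq_sqrt hy, Real.sqrt_nonneg x, Real.sqrt_nonneg y]

set_option maxHeartbeats 2000000 in
/-- Asymptotic flatness of the `L²(λ_n ⊗ ν)` seminorm over `d`-small pairs of products:
if `H` is uniformly bounded with uniformly converging discrete second moments and `G` has
an `L²(ν)` envelope `G₀` with `ν(G₀²) = 1`, then
`lim_{α↓0} limsup_n sup{‖f₁-f₂‖_{L²(λ_n⊗ν)} : d(f₁,f₂) ≤ α} = 0`. -/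
theorem fluctuation_control {U : Type*} [MeasurableSpace U]
    (ν : Measure U) [IsProbabilityMeasure ν]
    (H : Set (ℝ → ℝ)) (G : Set (U → ℝ)) (G₀ : U → ℝ)
    (hHne : H.Nonempty) (hGne : G.Nonempty)
    (hHbd : ∃ M : ℝ, ∀ h ∈ H, ∀ x ∈ Set.Icc (0:ℝ) 1, |h x| ≤ M)
    (hG₀meas : Measurable G₀)
    (hG₀L2 : MemLp G₀ 2 ν)
    (hG₀norm : ∫ x, (G₀ x) ^ 2 ∂ν = 1)
    (hGmeas : ∀ g ∈ G, Measurable g)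
    (hGenv : ∀ g ∈ G, ∀ x : U, |g x| ≤ G₀ x)
    (hHconv : Filter.Tendsto
      (fun n : ℕ => sSup {r : ℝ | ∃ h₁ ∈ H, ∃ h₂ ∈ H,
        r = |lamn n (fun x => (h₁ x - h₂ x) ^ 2) - lam (fun x => (h₁ x - h₂ x) ^ 2)|})
      Filter.atTop (nhds 0)) :
    Filter.Tendsto
      (fun α : ℝ => Filter.limsup
        (fun n : ℕ => sSup {r : ℝ | ∃ h₁ ∈ H, ∃ h₂ ∈ H, ∃ g₁ ∈ G, ∃ g₂ ∈ G,
          Real.sqrt (lam (fun x => (h₁ x - h₂ x) ^ 2))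
              + Real.sqrt (∫ x, (g₁ x - g₂ x) ^ 2 ∂ν) ≤ α ∧
          r = dProd ν n h₁ h₂ g₁ g₂})
        Filter.atTop)
      (nhdsWithin 0 (Set.Ioi 0)) (nhds 0) := by
  obtain ⟨M, hM⟩ := hHbd
  obtain ⟨h₀, hh₀⟩ := hHne
  have hM0 : 0 ≤ M := le_trans (abs_nonneg _) (hM h₀ hh₀ 0 ⟨le_refl 0, zero_le_one⟩)
  -- ε n : the uniform discrepancy for H
  set eps : ℕ → ℝ := fun n => sSup {r : ℝ | ∃ h₁ ∈ H, ∃ h₂ ∈ H,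
      r = |lamn n (fun x => (h₁ x - h₂ x) ^ 2) - lam (fun x => (h₁ x - h₂ x) ^ 2)|}
    with heps
  -- basic facts
  have hG₀sq : Integrable (fun x => G₀ x ^ 2) ν := hG₀L2.integrable_sq
  have hG₀nonneg : ∀ x, 0 ≤ G₀ x := fun x => by
    obtain ⟨g, hg⟩ := hGne
    exact le_trans (abs_nonneg _) (hGenv g hg x)
  -- bound on λₙ of squared differences
  have hlamn_bd : ∀ n : ℕ, ∀ h₁ ∈ H, ∀ h₂ ∈ H,
      lamn n (fun x => (h₁ x - h₂ x) ^ 2) ≤ 4 * M ^ 2 := by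
    intro n h₁ hh₁ h₂ hh₂
    rcases Nat.eq_zero_or_pos n with rfl | hn
    · simp [lamn]; positivity
    · unfold lamn
      have : ∑ i ∈ Finset.Icc 1 n, (h₁ ((i:ℝ)/n) - h₂ ((i:ℝ)/n)) ^ 2
          ≤ ∑ _i ∈ Finset.Icc 1 n, 4 * M ^ 2 := by
        apply Finset.sum_le_sum
        intro i hi
        simp only [Finset.mem_Icc] at hi
        have hx : (i:ℝ)/n ∈ Set.Icc (0:ℝ) 1 := by
          constructor
          · positivity
          · rw [div_le_one (by exact_mod_cast hn)]
            exact_mod_cast hi.2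
        have b1 := hM h₁ hh₁ _ hx
        have b2 := hM h₂ hh₂ _ hx
        have c1 := abs_le.mp b1
        have c2 := abs_le.mp b2
        nlinarith [c1.1, c1.2, c2.1, c2.2, sq_nonneg (h₁ ((i:ℝ)/n) + h₂ ((i:ℝ)/n))]
      calc (1/(n:ℝ)) * ∑ i ∈ Finset.Icc 1 n, (h₁ ((i:ℝ)/n) - h₂ ((i:ℝ)/n)) ^ 2
          ≤ (1/(n:ℝ)) * ∑ _i ∈ Finset.Icc 1 n, 4 * M ^ 2 := by
            apply mul_le_mul_of_nonneg_left this; positivity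
        _ = 4 * M ^ 2 := by
            rw [Finset.sum_const, Nat.card_Icc]
            field_simp
            rw [Nat.add_sub_cancel, nsmul_eq_mul]; ring
  have hlamn_nonneg : ∀ n : ℕ, ∀ h₁ h₂ : ℝ → ℝ,
      0 ≤ lamn n (fun x => (h₁ x - h₂ x) ^ 2) := by
    intro n h₁ h₂
    unfold lamn
    apply mul_nonneg (by positivity)
    exact Finset.sum_nonneg fun i _ => sq_nonneg _
  -- bound on λ of squared differences
  have hlam_bd : ∀ h₁ ∈ H, ∀ h₂ ∈ H,
      |lam (fun x => (h₁ x - h₂ x) ^ 2)| ≤ 4 * M ^ 2 := by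
    intro h₁ hh₁ h₂ hh₂
    have := intervalIntegral.norm_integral_le_of_norm_le_const
      (a := (0:ℝ)) (b := 1) (C := 4 * M ^ 2) (f := fun x => (h₁ x - h₂ x) ^ 2) ?_
    · simpa [lam] using this
    · intro x hx
      rw [Set.uIoc_of_le (by norm_num : (0:ℝ) ≤ 1)] at hx
      have hx' : x ∈ Set.Icc (0:ℝ) 1 := ⟨le_of_lt hx.1, hx.2⟩
      have b1 := abs_le.mp (hM h₁ hh₁ x hx')
      have b2 := abs_le.mp (hM h₂ hh₂ x hx')
      rw [Real.norm_eq_abs, abs_of_nonneg (sq_nonneg _)]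
      show (h₁ x - h₂ x) ^ 2 ≤ 4 * M ^ 2
      nlinarith [b1.1, b1.2, b2.1, b2.2, sq_nonneg (h₁ x + h₂ x)]
  -- eps is bounded above and nonnegative
  have heps_bdd : ∀ n, BddAbove {r : ℝ | ∃ h₁ ∈ H, ∃ h₂ ∈ H,
      r = |lamn n (fun x => (h₁ x - h₂ x) ^ 2) - lam (fun x => (h₁ x - h₂ x) ^ 2)|} := by
    intro n
    refine ⟨8 * M ^ 2, ?_⟩
    rintro r ⟨h₁, hh₁, h₂, hh₂, rfl⟩
    have := hlamn_bd n h₁ hh₁ h₂ hh₂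
    have := hlamn_nonneg n h₁ h₂
    have := abs_le.mp (hlam_bd h₁ hh₁ h₂ hh₂)
    rw [abs_sub_le_iff] at *
    constructor <;> nlinarith [abs_nonneg (lamn n (fun x => (h₁ x - h₂ x) ^ 2)
      - lam (fun x => (h₁ x - h₂ x) ^ 2))]
  have heps_mem : ∀ n, ∀ h₁ ∈ H, ∀ h₂ ∈ H,
      |lamn n (fun x => (h₁ x - h₂ x) ^ 2) - lam (fun x => (h₁ x - h₂ x) ^ 2)| ≤ eps n := by
    intro n h₁ hh₁ h₂ hh₂
    exact le_csSup (heps_bdd n) ⟨h₁, hh₁, h₂, hh₂, rfl⟩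
  have heps_nonneg : ∀ n, 0 ≤ eps n := fun n =>
    le_trans (abs_nonneg _) (heps_mem n h₀ hh₀ h₀ hh₀)
  -- integrability facts on U
  have hg_sq_int : ∀ g ∈ G, Integrable (fun x => g x ^ 2) ν := by
    intro g hg
    refine hG₀sq.mono ((hGmeas g hg).pow_const 2).aestronglyMeasurable ?_
    filter_upwards with x
    rw [Real.norm_eq_abs, Real.norm_eq_abs, abs_of_nonneg (sq_nonneg _),
      abs_of_nonneg (sq_nonneg _)]
    have := hGenv g hg x
    nlinarith [abs_nonneg (g x), neg_abs_le (g x), le_abs_self (g x)]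
  have hcomb_int : ∀ (a b : ℝ), ∀ g₁ ∈ G, ∀ g₂ ∈ G,
      Integrable (fun x => (a * g₁ x - b * g₂ x) ^ 2) ν := by
    intro a b g₁ hg₁ g₂ hg₂
    refine (hG₀sq.const_mul ((|a| + |b|) ^ 2)).mono
      (((measurable_const.mul (hGmeas g₁ hg₁)).sub
        (measurable_const.mul (hGmeas g₂ hg₂))).pow_const 2).aestronglyMeasurable ?_
    filter_upwards with x
    have e1 := hGenv g₁ hg₁ x
    have e2 := hGenv g₂ hg₂ x
    have h1 : |a * g₁ x - b * g₂ x| ≤ (|a| + |b|) * G₀ x := by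
      calc |a * g₁ x - b * g₂ x| ≤ |a * g₁ x| + |b * g₂ x| := abs_sub _ _
        _ = |a| * |g₁ x| + |b| * |g₂ x| := by rw [abs_mul, abs_mul]
        _ ≤ |a| * G₀ x + |b| * G₀ x := by gcongr
        _ = (|a| + |b|) * G₀ x := by ring
    rw [Real.norm_eq_abs, Real.norm_eq_abs, abs_of_nonneg (sq_nonneg _)]
    have hG0 := hG₀nonneg x
    have habs := abs_nonneg (a * g₁ x - b * g₂ x)
    rw [abs_of_nonneg (by positivity : (0:ℝ) ≤ (|a| + |b|) ^ 2 * G₀ x ^ 2)]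
    nlinarith [sq_abs (a * g₁ x - b * g₂ x)]
  have hdiff_int : ∀ g₁ ∈ G, ∀ g₂ ∈ G,
      Integrable (fun x => (g₁ x - g₂ x) ^ 2) ν := by
    intro g₁ hg₁ g₂ hg₂
    have := hcomb_int 1 1 g₁ hg₁ g₂ hg₂
    simpa using this
  -- ∫ g₂² ≤ 1
  have hg_sq_le_one : ∀ g ∈ G, ∫ x, g x ^ 2 ∂ν ≤ 1 := by
    intro g hg
    rw [← hG₀norm]
    apply integral_mono (hg_sq_int g hg) hG₀sq
    intro x
    show g x ^ 2 ≤ G₀ x ^ 2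
    have := hGenv g hg x
    nlinarith [neg_abs_le (g x), le_abs_self (g x), hG₀nonneg x]
  -- the key per-pair bound
  have key : ∀ (α : ℝ), 0 < α → ∀ (n : ℕ), ∀ h₁ ∈ H, ∀ h₂ ∈ H, ∀ g₁ ∈ G, ∀ g₂ ∈ G,
      Real.sqrt (lam (fun x => (h₁ x - h₂ x) ^ 2))
        + Real.sqrt (∫ x, (g₁ x - g₂ x) ^ 2 ∂ν) ≤ α →
      dProd ν n h₁ h₂ g₁ g₂ ≤ Real.sqrt (2 * (M ^ 2 + 1) * α ^ 2 + 2 * eps n) := by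
    intro α hα n h₁ hh₁ h₂ hh₂ g₁ hg₁ g₂ hg₂ hd
    have hs1 : Real.sqrt (lam (fun x => (h₁ x - h₂ x) ^ 2)) ≤ α :=
      le_trans (le_add_of_nonneg_right (Real.sqrt_nonneg _)) hd
    have hs2 : Real.sqrt (∫ x, (g₁ x - g₂ x) ^ 2 ∂ν) ≤ α :=
      le_trans (le_add_of_nonneg_left (Real.sqrt_nonneg _)) hd
    have hlam_nonneg : 0 ≤ lam (fun x => (h₁ x - h₂ x) ^ 2) := by
      apply intervalIntegral.integral_nonneg (by norm_num)
      intro x _; positivity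
    have hint_nonneg : 0 ≤ ∫ x, (g₁ x - g₂ x) ^ 2 ∂ν :=
      integral_nonneg fun x => sq_nonneg _
    have hlam_le : lam (fun x => (h₁ x - h₂ x) ^ 2) ≤ α ^ 2 := by
      have := Real.sqrt_le_sqrt (le_of_eq (Real.sq_sqrt hlam_nonneg).symm)
      nlinarith [Real.sq_sqrt hlam_nonneg, Real.sqrt_nonneg (lam (fun x => (h₁ x - h₂ x) ^ 2))]
    have hint_le : ∫ x, (g₁ x - g₂ x) ^ 2 ∂ν ≤ α ^ 2 := by
      nlinarith [Real.sq_sqrt hint_nonneg, Real.sqrt_nonneg (∫ x, (g₁ x - g₂ x) ^ 2 ∂ν)]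
    unfold dProd
    apply Real.sqrt_le_sqrt
    -- bound each integral
    have hterm : ∀ i ∈ Finset.Icc 1 n,
        ∫ x, (h₁ ((i:ℝ)/n) * g₁ x - h₂ ((i:ℝ)/n) * g₂ x) ^ 2 ∂ν
          ≤ 2 * M ^ 2 * α ^ 2 + 2 * (h₁ ((i:ℝ)/n) - h₂ ((i:ℝ)/n)) ^ 2 := by
      intro i hi
      simp only [Finset.mem_Icc] at hi
      have hn : 0 < n := lt_of_lt_of_le hi.1 hi.2
      have hx : (i:ℝ)/n ∈ Set.Icc (0:ℝ) 1 := by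
        constructor
        · positivity
        · rw [div_le_one (by exact_mod_cast hn)]
          exact_mod_cast hi.2
      set a := h₁ ((i:ℝ)/n)
      set b := h₂ ((i:ℝ)/n)
      have ha : |a| ≤ M := hM h₁ hh₁ _ hx
      have hstep : ∫ x, (a * g₁ x - b * g₂ x) ^ 2 ∂ν
          ≤ ∫ x, (2 * a ^ 2 * (g₁ x - g₂ x) ^ 2 + 2 * (a - b) ^ 2 * g₂ x ^ 2) ∂ν := by
        apply integral_mono (hcomb_int a b g₁ hg₁ g₂ hg₂)
        · exact (((hdiff_int g₁ hg₁ g₂ hg₂).const_mul _).add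
            ((hg_sq_int g₂ hg₂).const_mul _))
        · intro x
          show (a * g₁ x - b * g₂ x) ^ 2
              ≤ 2 * a ^ 2 * (g₁ x - g₂ x) ^ 2 + 2 * (a - b) ^ 2 * g₂ x ^ 2
          nlinarith [sq_nonneg (a * (g₁ x - g₂ x) - (a - b) * g₂ x),
            sq_nonneg (a * (g₁ x - g₂ x) + (a - b) * g₂ x)]
      have heq : ∫ x, (2 * a ^ 2 * (g₁ x - g₂ x) ^ 2 + 2 * (a - b) ^ 2 * g₂ x ^ 2) ∂ν
          = 2 * a ^ 2 * ∫ x, (g₁ x - g₂ x) ^ 2 ∂ν + 2 * (a - b) ^ 2 * ∫ x, g₂ x ^ 2 ∂ν := by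
        rw [integral_add (((hdiff_int g₁ hg₁ g₂ hg₂).const_mul _))
          ((hg_sq_int g₂ hg₂).const_mul _), integral_const_mul, integral_const_mul]
      rw [heq] at hstep
      have hg₂nonneg : 0 ≤ ∫ x, g₂ x ^ 2 ∂ν := integral_nonneg fun x => sq_nonneg _
      have hg₂le := hg_sq_le_one g₂ hg₂
      have ha2 : a ^ 2 ≤ M ^ 2 := by nlinarith [abs_nonneg a, sq_abs a, neg_abs_le a, le_abs_self a]
      calc ∫ x, (a * g₁ x - b * g₂ x) ^ 2 ∂ν
          ≤ 2 * a ^ 2 * ∫ x, (g₁ x - g₂ x) ^ 2 ∂ν + 2 * (a - b) ^ 2 * ∫ x, g₂ x ^ 2 ∂ν := hstep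
        _ ≤ 2 * M ^ 2 * α ^ 2 + 2 * (a - b) ^ 2 := by
            have h1 : 2 * a ^ 2 * ∫ x, (g₁ x - g₂ x) ^ 2 ∂ν ≤ 2 * M ^ 2 * α ^ 2 := by
              nlinarith [sq_nonneg a]
            have h2 : 2 * (a - b) ^ 2 * ∫ x, g₂ x ^ 2 ∂ν ≤ 2 * (a - b) ^ 2 := by
              nlinarith [sq_nonneg (a - b)]
            linarith
    rcases Nat.eq_zero_or_pos n with rfl | hn
    · rw [Finset.Icc_eq_empty (by omega), Finset.sum_empty, mul_zero]
      have := heps_nonneg 0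
      positivity
    · have hsum : ∑ i ∈ Finset.Icc 1 n,
          (∫ x, (h₁ ((i:ℝ)/n) * g₁ x - h₂ ((i:ℝ)/n) * g₂ x) ^ 2 ∂ν)
          ≤ ∑ i ∈ Finset.Icc 1 n,
            (2 * M ^ 2 * α ^ 2 + 2 * (h₁ ((i:ℝ)/n) - h₂ ((i:ℝ)/n)) ^ 2) :=
        Finset.sum_le_sum hterm
      have hcard : (Finset.Icc 1 n).card = n := by rw [Nat.card_Icc]; omega
      have hlamn_le : lamn n (fun x => (h₁ x - h₂ x) ^ 2)
          ≤ α ^ 2 + eps n := by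
        have := heps_mem n h₁ hh₁ h₂ hh₂
        have := abs_le.mp this
        linarith
      calc (1/(n:ℝ)) * ∑ i ∈ Finset.Icc 1 n,
            ∫ x, (h₁ ((i:ℝ)/n) * g₁ x - h₂ ((i:ℝ)/n) * g₂ x) ^ 2 ∂ν
          ≤ (1/(n:ℝ)) * ∑ i ∈ Finset.Icc 1 n,
            (2 * M ^ 2 * α ^ 2 + 2 * (h₁ ((i:ℝ)/n) - h₂ ((i:ℝ)/n)) ^ 2) := by
            apply mul_le_mul_of_nonneg_left hsum; positivity
        _ = 2 * M ^ 2 * α ^ 2 + 2 * lamn n (fun x => (h₁ x - h₂ x) ^ 2) := by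
            rw [Finset.sum_add_distrib, Finset.sum_const, hcard, ← Finset.mul_sum]
            unfold lamn
            have hn' : (n:ℝ) ≠ 0 := Nat.cast_ne_zero.mpr hn.ne' 
            field_simp
            ring
        _ ≤ 2 * M ^ 2 * α ^ 2 + 2 * (α ^ 2 + eps n) := by linarith
        _ = 2 * (M ^ 2 + 1) * α ^ 2 + 2 * eps n := by ring
  -- define L α
  set L : ℝ → ℝ := fun α => Filter.limsup
      (fun n : ℕ => sSup {r : ℝ | ∃ h₁ ∈ H, ∃ h₂ ∈ H, ∃ g₁ ∈ G, ∃ g₂ ∈ G,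
        Real.sqrt (lam (fun x => (h₁ x - h₂ x) ^ 2))
            + Real.sqrt (∫ x, (g₁ x - g₂ x) ^ 2 ∂ν) ≤ α ∧
        r = dProd ν n h₁ h₂ g₁ g₂}) Filter.atTop with hL
  -- the inner sup bounds
  set C : ℝ := Real.sqrt (2 * (M ^ 2 + 1)) with hC
  have hC0 : 0 ≤ C := Real.sqrt_nonneg _
  have hsup_bd : ∀ (α : ℝ), 0 < α → ∀ n : ℕ,
      sSup {r : ℝ | ∃ h₁ ∈ H, ∃ h₂ ∈ H, ∃ g₁ ∈ G, ∃ g₂ ∈ G,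
        Real.sqrt (lam (fun x => (h₁ x - h₂ x) ^ 2))
            + Real.sqrt (∫ x, (g₁ x - g₂ x) ^ 2 ∂ν) ≤ α ∧
        r = dProd ν n h₁ h₂ g₁ g₂} ≤ C * α + Real.sqrt (2 * eps n) := by
    intro α hα n
    apply Real.sSup_le
    · rintro r ⟨h₁, hh₁, h₂, hh₂, g₁, hg₁, g₂, hg₂, hcon, rfl⟩
      calc dProd ν n h₁ h₂ g₁ g₂
          ≤ Real.sqrt (2 * (M ^ 2 + 1) * α ^ 2 + 2 * eps n) :=
            key α hα n h₁ hh₁ h₂ hh₂ g₁ hg₁ g₂ hg₂ hcon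
        _ ≤ Real.sqrt (2 * (M ^ 2 + 1) * α ^ 2) + Real.sqrt (2 * eps n) := by
            apply sqrt_add_le_aux
            · positivity
            · linarith [heps_nonneg n]
        _ = C * α + Real.sqrt (2 * eps n) := by
            have : Real.sqrt (2 * (M ^ 2 + 1) * α ^ 2) = C * α := by
              rw [hC, Real.sqrt_mul (by positivity), Real.sqrt_sq hα.le]
            rw [this]
    · have := heps_nonneg n
      positivity
  have hsup_nonneg : ∀ (α : ℝ) (n : ℕ),
      0 ≤ sSup {r : ℝ | ∃ h₁ ∈ H, ∃ h₂ ∈ H, ∃ g₁ ∈ G, ∃ g₂ ∈ G,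
        Real.sqrt (lam (fun x => (h₁ x - h₂ x) ^ 2))
            + Real.sqrt (∫ x, (g₁ x - g₂ x) ^ 2 ∂ν) ≤ α ∧
        r = dProd ν n h₁ h₂ g₁ g₂} := by
    intro α n
    apply Real.sSup_nonneg
    rintro r ⟨h₁, hh₁, h₂, hh₂, g₁, hg₁, g₂, hg₂, hcon, rfl⟩
    exact Real.sqrt_nonneg _
  -- the comparison sequence tends to C * α
  have hgtend : ∀ α : ℝ, Filter.Tendsto (fun n => C * α + Real.sqrt (2 * eps n))
      Filter.atTop (nhds (C * α)) := by
    intro α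
    have h1 : Filter.Tendsto (fun n => Real.sqrt (2 * eps n)) Filter.atTop (nhds 0) := by
      have h2 : Filter.Tendsto (fun n => 2 * eps n) Filter.atTop (nhds 0) := by
        have := hHconv.const_mul 2
        simpa using this
      have h3 := (Real.continuous_sqrt.tendsto 0).comp h2
      rw [Real.sqrt_zero] at h3
      exact h3
    have := (tendsto_const_nhds (x := C * α) (f := Filter.atTop (α := ℕ))).add h1
    simpa using this
  -- bounds on L α for α > 0
  have hLle : ∀ α : ℝ, 0 < α → L α ≤ C * α := by
    intro α hα
    have hle : (fun n : ℕ => sSup {r : ℝ | ∃ h₁ ∈ H, ∃ h₂ ∈ H, ∃ g₁ ∈ G, ∃ g₂ ∈ G,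
        Real.sqrt (lam (fun x => (h₁ x - h₂ x) ^ 2))
            + Real.sqrt (∫ x, (g₁ x - g₂ x) ^ 2 ∂ν) ≤ α ∧
        r = dProd ν n h₁ h₂ g₁ g₂}) ≤ᶠ[Filter.atTop]
        (fun n => C * α + Real.sqrt (2 * eps n)) :=
      Filter.Eventually.of_forall (hsup_bd α hα)
    calc L α ≤ Filter.limsup (fun n => C * α + Real.sqrt (2 * eps n)) Filter.atTop := by
          refine Filter.limsup_le_limsup hle ?_ ((hgtend α).isBoundedUnder_le)
          exact Filter.IsBoundedUnder.isCoboundedUnder_le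
            ⟨0, Filter.eventually_map.2 (Filter.Eventually.of_forall (fun n => hsup_nonneg α n))⟩
      _ = C * α := (hgtend α).limsup_eq
  have hLge : ∀ α : ℝ, 0 < α → 0 ≤ L α := by
    intro α hα
    exact Filter.le_limsup_of_frequently_le
      (Filter.Frequently.of_forall (fun n => hsup_nonneg α n))
      (((hgtend α).isBoundedUnder_le).mono_le
        (Filter.Eventually.of_forall (hsup_bd α hα)))
  -- squeeze
  have hsq : Filter.Tendsto (fun α : ℝ => C * α) (nhdsWithin 0 (Set.Ioi 0)) (nhds 0) := by
    have : Filter.Tendsto (fun α : ℝ => C * α) (nhds 0) (nhds (C * 0)) :=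
      (continuous_const.mul continuous_id).tendsto 0
    rw [mul_zero] at this
    exact this.mono_left nhdsWithin_le_nhds
  apply tendsto_of_tendsto_of_tendsto_of_le_of_le' tendsto_const_nhds hsq
  · filter_upwards [self_mem_nhdsWithin] with α hα
    exact hLge α hα
  · filter_upwards [self_mem_nhdsWithin] with α hα
    exact hLle α hα
end

section
/- Let q : [0,1] × U → ℝ be measurable such that (a) |q(s,x)| ≤ g(x) for all (s,x) with g ∈ L²(ν), and (b) for each x ∈ U the map s ↦ q(s,x) is continuous at λ-almost every s ∈ [0,1]. Then (λ_n ⊗ ν)(q²) → (λ ⊗ ν)(q²) as n → ∞, where λ_n = n⁻¹∑_{i=1}^n δ_{i/n}. -/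
open scoped BigOperators
open MeasureTheory Filter Set
open scoped Topology

/-- The right endpoint of the dyadic-style partition cell containing `s`. -/
noncomputable def stepPt (n : ℕ) (s : ℝ) : ℝ := (⌈(n : ℝ) * s⌉ : ℤ) / n

lemma stepPt_measurable (n : ℕ) : Measurable (stepPt n) := by
  apply Measurable.div _ measurable_const
  exact (measurable_from_top (f := fun z : ℤ => (z:ℝ))).comp
    ((measurable_const.mul measurable_id).ceil)

lemma stepPt_mem {n : ℕ} {s : ℝ} (hs : s ∈ Set.Icc (0:ℝ) 1) :
    stepPt n s ∈ Set.Icc (0:ℝ) 1 := by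
  obtain ⟨h0, h1⟩ := hs
  constructor
  · apply div_nonneg _ (Nat.cast_nonneg n)
    exact_mod_cast Int.ceil_nonneg (by positivity)
  · rcases Nat.eq_zero_or_pos n with h | h
    · simp [stepPt, h]
    · have hn : (0:ℝ) < n := by exact_mod_cast h
      rw [stepPt, div_le_one hn]
      have : ⌈(n:ℝ) * s⌉ ≤ (n : ℤ) := by
        rw [Int.ceil_le]
        push_cast
        nlinarith
      exact_mod_cast this

lemma stepPt_tendsto (s : ℝ) : Tendsto (fun n : ℕ => stepPt n s) atTop (𝓝 s) := by
  have h1 : Tendsto (fun n : ℕ => s + 1 / (n:ℝ)) atTop (𝓝 s) := by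
    simpa using tendsto_const_nhds.add (tendsto_one_div_atTop_nhds_zero_nat (𝕜 := ℝ))
  refine tendsto_of_tendsto_of_tendsto_of_le_of_le' (tendsto_const_nhds) h1 ?_ ?_
  · filter_upwards [eventually_ge_atTop 1] with n hn
    have hn' : (0:ℝ) < n := by exact_mod_cast hn
    rw [stepPt, le_div_iff₀ hn', mul_comm]
    exact Int.le_ceil _
  · filter_upwards [eventually_ge_atTop 1] with n hn
    have hn' : (0:ℝ) < n := by exact_mod_cast hn
    rw [stepPt, div_le_iff₀ hn']
    have := (Int.ceil_lt_add_one ((n:ℝ) * s)).le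
    calc ((⌈(n:ℝ) * s⌉ : ℤ) : ℝ) ≤ (n:ℝ) * s + 1 := this
      _ = (s + 1 / n) * n := by field_simp

lemma stepPt_eq {n : ℕ} (hn : 0 < n) {i : ℕ} {s : ℝ}
    (h1 : (i:ℝ)/n < s) (h2 : s ≤ ((i:ℝ)+1)/n) :
    stepPt n s = ((i:ℝ)+1)/n := by
  have hn' : (0:ℝ) < n := by exact_mod_cast hn
  have hA : (i:ℝ) < (n:ℝ) * s := by
    have := (div_lt_iff₀ hn').mp h1
    nlinarith
  have hB : (n:ℝ) * s ≤ (i:ℝ) + 1 := by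
    have := (le_div_iff₀ hn').mp h2
    nlinarith
  have hceil : ⌈(n:ℝ) * s⌉ = (i : ℤ) + 1 := by
    rw [Int.ceil_eq_iff] <;> constructor <;> push_cast <;> linarith
  rw [stepPt, hceil]
  push_cast
  ring

/-- The key Riemann-sum identity: the integral of the step approximation equals the
Riemann sum. -/
lemma step_integral (f : ℝ → ℝ) {n : ℕ} (hn : 1 ≤ n) :
    ∫ s in Set.Icc (0:ℝ) 1, f (stepPt n s) =
      (1 / (n:ℝ)) * ∑ i ∈ Finset.Icc 1 n, f ((i:ℝ)/n) := by
  have hn' : (0:ℝ) < n := by exact_mod_cast hn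
  set a : ℕ → ℝ := fun k => (k:ℝ)/n with ha
  have hmono : ∀ k : ℕ, a k ≤ a (k+1) := by
    intro k
    have h : ((k:ℝ)) ≤ ((k+1:ℕ):ℝ) := by push_cast; linarith
    exact (div_le_div_iff_of_pos_right hn').mpr h
  have heq : ∀ k : ℕ, Set.EqOn (fun s => f (stepPt n s)) (fun _ => f (((k:ℝ)+1)/n))
      (Set.Ioc (a k) (a (k+1))) := by
    intro k s hs
    simp only [ha, Set.mem_Ioc] at hs
    push_cast at hs
    have : stepPt n s = ((k:ℝ)+1)/n := stepPt_eq (by omega) hs.1 hs.2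
    simp [this]
  have key : ∀ k : ℕ, ∫ s in (a k)..(a (k+1)), f (stepPt n s)
      = (1/(n:ℝ)) * f (((k:ℝ)+1)/n) := by
    intro k
    rw [intervalIntegral.integral_of_le (hmono k)]
    rw [setIntegral_congr_fun measurableSet_Ioc (heq k), setIntegral_const,
      measureReal_def, Real.volume_Ioc]
    have : a (k+1) - a k = 1 / n := by
      simp only [ha]
      push_cast
      rw [div_sub_div_same]
      congr 1
      ring
    rw [this, ENNReal.toReal_ofReal (by positivity)]
    simp
  have hint : ∀ k : ℕ, k < n → IntervalIntegrable (fun s => f (stepPt n s))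
      volume (a k) (a (k+1)) := by
    intro k _
    rw [intervalIntegrable_iff_integrableOn_Ioc_of_le (hmono k)]
    have hlt : volume (Set.Ioc (a k) (a (k+1))) < ⊤ := by
      rw [Real.volume_Ioc]; exact ENNReal.ofReal_lt_top
    exact (integrableOn_const (C := f (((k:ℝ)+1)/n)) hlt.ne).congr_fun
      (fun s hs => ((heq k) hs).symm) measurableSet_Ioc
  have hsum := intervalIntegral.sum_integral_adjacent_intervals (μ := volume)
    (a := a) (n := n) hint
  have ha0 : a 0 = 0 := by simp [ha]
  have han : a n = 1 := by simp [ha, hn'.ne']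
  rw [ha0, han] at hsum
  have lhs_eq : ∫ s in Set.Icc (0:ℝ) 1, f (stepPt n s)
      = ∑ k ∈ Finset.range n, ∫ s in (a k)..(a (k+1)), f (stepPt n s) := by
    rw [hsum, intervalIntegral.integral_of_le (by norm_num : (0:ℝ) ≤ 1),
      MeasureTheory.integral_Icc_eq_integral_Ioc]
  rw [lhs_eq]
  rw [Finset.mul_sum]
  rw [show Finset.Icc 1 n = Finset.Ico 1 (n+1) by rw [Finset.Ico_add_one_right_eq_Icc],
    Finset.sum_Ico_eq_sum_range]
  simp only [Nat.add_sub_cancel]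
  refine Finset.sum_congr rfl fun k _ => ?_
  rw [key k]
  push_cast
  ring

/-- If `q` is measurable with an `L²(ν)` envelope and `s ↦ q(s,x)` is a.e. continuous for
each `x`, then `(λ_n ⊗ ν)(q²) → (λ ⊗ ν)(q²)`. -/
theorem discrete_product_second_moment_convergence {U : Type*} [MeasurableSpace U]
    (ν : Measure U) [IsProbabilityMeasure ν]
    (q : ℝ → U → ℝ) (g : U → ℝ)
    (hqmeas : Measurable (Function.uncurry q))
    (hgL2 : MemLp g 2 ν)
    (henv : ∀ s ∈ Set.Icc (0:ℝ) 1, ∀ x : U, |q s x| ≤ g x)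
    (hcont : ∀ x : U, ∀ᵐ s ∂(volume.restrict (Set.Icc (0:ℝ) 1)),
      ContinuousAt (fun s' => q s' x) s) :
    Filter.Tendsto
      (fun n : ℕ => (1 / (n:ℝ)) * ∑ i ∈ Finset.Icc 1 n, ∫ x, (q ((i:ℝ) / n) x) ^ 2 ∂ν)
      Filter.atTop
      (nhds (∫ p : ℝ × U, (q p.1 p.2) ^ 2 ∂((volume.restrict (Set.Icc (0:ℝ) 1)).prod ν))) := by
  set μ : Measure ℝ := volume.restrict (Set.Icc (0:ℝ) 1) with hμ
  have hg2 : Integrable (fun x => g x ^ 2) ν := hgL2.integrable_sq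
  -- measurability of slices
  have hmeas_s : ∀ s : ℝ, Measurable (fun x => q s x ^ 2) := fun s =>
    (hqmeas.comp (measurable_const.prodMk measurable_id)).pow_const 2
  have hbound : ∀ s ∈ Set.Icc (0:ℝ) 1, ∀ x, ‖q s x ^ 2‖ ≤ g x ^ 2 := by
    intro s hs x
    rw [Real.norm_eq_abs, abs_pow, ← sq_abs (g x)]
    exact pow_le_pow_left₀ (abs_nonneg _) ((henv s hs x).trans (le_abs_self _)) 2
  have hint_s : ∀ s ∈ Set.Icc (0:ℝ) 1, Integrable (fun x => q s x ^ 2) ν := by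
    intro s hs
    exact hg2.mono' (hmeas_s s).aestronglyMeasurable (ae_of_all _ (hbound s hs))
  have hmem_div : ∀ {n i : ℕ}, i ∈ Finset.Icc 1 n → ((i:ℝ)/n) ∈ Set.Icc (0:ℝ) 1 := by
    intro n i hi
    rw [Finset.mem_Icc] at hi
    have hn' : (0:ℝ) < n := by
      have : 1 ≤ n := le_trans hi.1 hi.2
      exact_mod_cast this
    constructor
    · positivity
    · rw [div_le_one hn']; exact_mod_cast hi.2
  set H : U → ℝ := fun x => ∫ s, q s x ^ 2 ∂μ with hH
  set h : ℕ → U → ℝ := fun n x => (1 / (n:ℝ)) * ∑ i ∈ Finset.Icc 1 n, q ((i:ℝ)/n) x ^ 2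
    with hh
  -- inner convergence for each x
  have key : ∀ x : U, Tendsto (fun n : ℕ => ∫ s, q (stepPt n s) x ^ 2 ∂μ) atTop (𝓝 (H x)) := by
    intro x
    apply tendsto_integral_of_dominated_convergence (fun _ => g x ^ 2)
    · intro n
      exact (((hqmeas.comp (((stepPt_measurable n)).prodMk measurable_const)).pow_const
        2)).aestronglyMeasurable
    · exact integrable_const _
    · intro n
      filter_upwards [ae_restrict_mem measurableSet_Icc] with s hs
      exact hbound _ (stepPt_mem hs) x
    · filter_upwards [hcont x] with s hs
      exact ((hs.tendsto).comp (stepPt_tendsto s)).pow 2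
  -- identify the Riemann sum with the step integral
  have hstep : ∀ x : U, ∀ n : ℕ, 1 ≤ n →
      h n x = ∫ s, q (stepPt n s) x ^ 2 ∂μ := by
    intro x n hn
    rw [hμ, step_integral (fun s => q s x ^ 2) hn]
  have keyh : ∀ x : U, Tendsto (fun n : ℕ => h n x) atTop (𝓝 (H x)) := by
    intro x
    apply (key x).congr'
    filter_upwards [eventually_ge_atTop 1] with n hn
    exact (hstep x n hn).symm
  -- outer dominated convergence
  have houter : Tendsto (fun n : ℕ => ∫ x, h n x ∂ν) atTop (𝓝 (∫ x, H x ∂ν)) := by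
    apply tendsto_integral_of_dominated_convergence (fun x => g x ^ 2)
    · intro n
      apply AEStronglyMeasurable.const_mul
      exact (Finset.aestronglyMeasurable_fun_sum _ fun i _ =>
        (hmeas_s _).aestronglyMeasurable)
    · exact hg2
    · intro n
      apply ae_of_all
      intro x
      have h1 : (0:ℝ) ≤ h n x := by
        apply mul_nonneg (by positivity)
        exact Finset.sum_nonneg fun i _ => sq_nonneg _
      rw [Real.norm_eq_abs, abs_of_nonneg h1, hh]
      calc (1 / (n:ℝ)) * ∑ i ∈ Finset.Icc 1 n, q ((i:ℝ)/n) x ^ 2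
          ≤ (1 / (n:ℝ)) * ∑ i ∈ Finset.Icc 1 n, g x ^ 2 := by
            apply mul_le_mul_of_nonneg_left ?_ (by positivity)
            refine Finset.sum_le_sum fun i hi => ?_
            have := hbound _ (hmem_div hi) x
            rwa [Real.norm_eq_abs, abs_of_nonneg (sq_nonneg _)] at this
        _ ≤ g x ^ 2 := by
            rw [Finset.sum_const, Nat.card_Icc]
            simp only [Nat.add_sub_cancel, nsmul_eq_mul]
            rcases Nat.eq_zero_or_pos n with hn | hn
            · simp [hn, sq_nonneg]
            · have hn' : (0:ℝ) < n := by exact_mod_cast hn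
              rw [← mul_assoc, one_div, inv_mul_cancel₀ (ne_of_gt hn'), one_mul]
    · exact ae_of_all _ keyh
  -- identify LHS with ∫ h n dν
  have hLHS : ∀ n : ℕ, (1 / (n:ℝ)) * ∑ i ∈ Finset.Icc 1 n, ∫ x, (q ((i:ℝ) / n) x) ^ 2 ∂ν
      = ∫ x, h n x ∂ν := by
    intro n
    rw [hh]
    rw [MeasureTheory.integral_const_mul]
    congr 1
    rw [integral_finset_sum _ fun i hi => hint_s _ (hmem_div hi)]
  -- identify the RHS via Fubini
  have haemem : ∀ᵐ p : ℝ × U ∂(μ.prod ν), p.1 ∈ Set.Icc (0:ℝ) 1 := by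
    have hnull : (μ.prod ν) (((Set.Icc (0:ℝ) 1)ᶜ) ×ˢ (Set.univ : Set U)) = 0 := by
      rw [Measure.prod_prod, hμ, Measure.restrict_apply (measurableSet_Icc.compl)]
      simp
    rw [ae_iff]
    refine measure_mono_null ?_ hnull
    intro p hp
    rw [Set.mem_setOf_eq] at hp
    exact Set.mem_prod.mpr ⟨hp, Set.mem_univ _⟩
  have hprodint : Integrable (fun p : ℝ × U => q p.1 p.2 ^ 2) (μ.prod ν) := by
    have hgint : Integrable (fun p : ℝ × U => g p.2 ^ 2) (μ.prod ν) := by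
      have := (integrable_const (1:ℝ) (μ := μ)).mul_prod hg2 (ν := ν)
      simpa using this
    apply hgint.mono' (hqmeas.pow_const 2).aestronglyMeasurable
    filter_upwards [haemem] with p hp
    exact hbound _ hp p.2
  have hRHS : ∫ p : ℝ × U, (q p.1 p.2) ^ 2 ∂(μ.prod ν) = ∫ x, H x ∂ν := by
    rw [MeasureTheory.integral_prod _ hprodint]
    exact MeasureTheory.integral_integral_swap hprodint
  rw [hRHS]
  exact houter.congr fun n => (hLHS n).symm
end
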